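/- (Zero external input: output decrease of the closed loop.) Let τ, μ > 0, m ∈ ℕ with m ≥ 1, ℓ₁, ℓ₂ > 0, ν̂₂ ≥ 0, ν̄₁, ρ̄₁, ρ̂₂, α̂ ∈ ℝ. Define ν̄₂ = ν̂₂(1 − 1/ℓ₂), ρ̄₂ = ρ̂₂ − 1/(4ℓ₁), ᾱ₂ = α̂ + τ(mμ²/4)(ℓ₁ + ν̂₂(ℓ₂ + 1)). Let V₁ : ℝⁿ¹ → ℝ, V₂ : ℝⁿ² → ℝ, and let x₁ : ℕ → ℝⁿ¹, x̂₂ : ℕ → ℝⁿ², and y₁, ŷ₂, û₂ : ℕ → ℝᵐ be sequences. Assume for every k ∈ ℕ: (a) (1/τ)(V₁(x₁[k+1]) − V₁(x₁[k])) ≤ (−ŷ₂[k])ᵀy₁[k] − ν̄₁‖ŷ₂[k]‖₂² − ρ̄₁‖y₁[k]‖₂²; (b) (1/τ)(V₂(x̂₂[k+1]) − V₂(x̂₂[k])) ≤ û₂[k]ᵀŷ₂[k] − ν̂₂‖û₂[k]‖₂² − ρ̂₂‖ŷ₂[k]‖₂² + α̂/τ; (c) ‖û₂[k] − y₁[k]‖₂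 ≤ (√m)μ/2. Then, with V(k) := V₁(x₁[k]) + V₂(x̂₂[k]), for every k ∈ ℕ: (1/τ)(V(k+1) − V(k)) ≤ −min{ν̄₂ + ρ̄₁, ν̄₁ + ρ̄₂}(‖y₁[k]‖₂² + ‖ŷ₂[k]‖₂²) + ᾱ₂/τ. -/

import Mathlib

open scoped RealInnerProductSpace

set_option maxHeartbeats 1600000 in
/-- With zero external inputs, the closed loop of the plant (degraded indices
`ν̄₁, ρ̄₁`) and the symbolic controller (degraded indices `ν̂₂, ρ̂₂`, bias `α̂`)
satisfies an output-decrease inequality. -/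
theorem stmt_18 {n₁ n₂ m : ℕ} (τ μ : ℝ) (hτ : 0 < τ) (hμ : 0 < μ) (hm : 1 ≤ m)
    (ℓ₁ ℓ₂ : ℝ) (hℓ₁ : 0 < ℓ₁) (hℓ₂ : 0 < ℓ₂)
    (νhat₂ : ℝ) (hνhat₂ : 0 ≤ νhat₂) (νbar₁ ρbar₁ ρhat₂ αhat : ℝ)
    (V₁ : EuclideanSpace ℝ (Fin n₁) → ℝ) (V₂ : EuclideanSpace ℝ (Fin n₂) → ℝ)
    (x₁ : ℕ → EuclideanSpace ℝ (Fin n₁)) (xhat₂ : ℕ → EuclideanSpace ℝ (Fin n₂))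
    (y₁ yhat₂ uhat₂ : ℕ → EuclideanSpace ℝ (Fin m))
    -- (a) plant passivity inequality with input −ŷ₂
    (hplant : ∀ k : ℕ, (1 / τ) * (V₁ (x₁ (k + 1)) - V₁ (x₁ k)) ≤
      ⟪-yhat₂ k, y₁ k⟫ - νbar₁ * ‖yhat₂ k‖ ^ 2 - ρbar₁ * ‖y₁ k‖ ^ 2)
    -- (b) controller quasi-passivity inequality
    (hctrl : ∀ k : ℕ, (1 / τ) * (V₂ (xhat₂ (k + 1)) - V₂ (xhat₂ k)) ≤
      ⟪uhat₂ k, yhat₂ k⟫ - νhat₂ * ‖uhat₂ k‖ ^ 2 - ρhat₂ * ‖yhat₂ k‖ ^ 2 + αhat / τ)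
    -- (c) quantization of the feedback signal y₁
    (hq : ∀ k : ℕ, ‖uhat₂ k - y₁ k‖ ≤ Real.sqrt m * μ / 2) :
    ∀ k : ℕ,
      (1 / τ) * ((V₁ (x₁ (k + 1)) + V₂ (xhat₂ (k + 1))) - (V₁ (x₁ k) + V₂ (xhat₂ k))) ≤
        -min (νhat₂ * (1 - 1 / ℓ₂) + ρbar₁) (νbar₁ + (ρhat₂ - 1 / (4 * ℓ₁)))
            * (‖y₁ k‖ ^ 2 + ‖yhat₂ k‖ ^ 2)
          + (αhat + τ * (m * μ ^ 2 / 4) * (ℓ₁ + νhat₂ * (ℓ₂ + 1))) / τ := by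
  intro k
  have h1 := hplant k
  have h2 := hctrl k
  have hq' := hq k
  set a := y₁ k with ha
  set b := yhat₂ k with hb
  set u := uhat₂ k with hu
  set A := ‖a‖ with hA
  set B := ‖b‖ with hB
  set E := ‖u - a‖ with hE
  have hA0 : 0 ≤ A := norm_nonneg _
  have hB0 : 0 ≤ B := norm_nonneg _
  have hE0 : 0 ≤ E := norm_nonneg _
  have hU0 : 0 ≤ ‖u‖ := norm_nonneg _
  -- quantization bound squared
  have hE2 : E ^ 2 ≤ (m : ℝ) * μ ^ 2 / 4 := by
    have hm' : (0 : ℝ) ≤ (m : ℝ) := Nat.cast_nonneg m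
    have hs : Real.sqrt m ^ 2 = (m : ℝ) := Real.sq_sqrt hm'
    nlinarith [Real.sqrt_nonneg (m : ℝ), hμ.le]
  -- inner product identity
  have hinner : ⟪-b, a⟫ + ⟪u, b⟫ = ⟪u - a, b⟫ := by
    rw [inner_neg_left, inner_sub_left, real_inner_comm b a]
    ring
  have hCS : ⟪u - a, b⟫ ≤ E * B := real_inner_le_norm _ _
  -- Young's inequality
  have hyoung : E * B ≤ ℓ₁ * E ^ 2 + 1 / (4 * ℓ₁) * B ^ 2 := by
    have h := sq_nonneg (2 * ℓ₁ * E - B)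
    have h4 : (0:ℝ) < 4 * ℓ₁ := by linarith
    have key : ℓ₁ * E ^ 2 + 1 / (4 * ℓ₁) * B ^ 2 - E * B = (2 * ℓ₁ * E - B) ^ 2 / (4 * ℓ₁) := by
      field_simp
      ring
    have h5 : 0 ≤ (2 * ℓ₁ * E - B) ^ 2 / (4 * ℓ₁) := div_nonneg h h4.le
    linarith
  -- triangle inequality consequence
  have htri : A ≤ ‖u‖ + E := by
    calc A = ‖u - (u - a)‖ := by rw [sub_sub_cancel]
    _ ≤ ‖u‖ + E := norm_sub_le _ _
  have hu2 : (1 - 1 / ℓ₂) * A ^ 2 ≤ ‖u‖ ^ 2 + (ℓ₂ + 1) * E ^ 2 := by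
    have key : (ℓ₂ - 1) * A ^ 2 ≤ ℓ₂ * ‖u‖ ^ 2 + ℓ₂ * (ℓ₂ + 1) * E ^ 2 := by
      rcases le_or_gt 1 ℓ₂ with hc | hc
      · have h1ℓ : (0:ℝ) ≤ ℓ₂ - 1 := by linarith
        have hAle : A ^ 2 ≤ (‖u‖ + E) ^ 2 := by nlinarith
        have step1 : (ℓ₂ - 1) * A ^ 2 ≤ (ℓ₂ - 1) * (‖u‖ + E) ^ 2 :=
          mul_le_mul_of_nonneg_left hAle h1ℓ
        nlinarith [sq_nonneg (‖u‖ - (ℓ₂ - 1) * E)]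
      · have hle : (ℓ₂ - 1) * A ^ 2 ≤ 0 :=
          mul_nonpos_of_nonpos_of_nonneg (by linarith) (sq_nonneg A)
        have h1 : 0 ≤ ℓ₂ * ‖u‖ ^ 2 := by positivity
        have h2 : 0 ≤ ℓ₂ * (ℓ₂ + 1) * E ^ 2 := by positivity
        linarith
    have hid : (1 - 1 / ℓ₂) * A ^ 2 = ((ℓ₂ - 1) * A ^ 2) / ℓ₂ := by
      field_simp
    rw [hid, div_le_iff₀ hℓ₂]
    nlinarith
  -- multiply by νhat₂ ≥ 0
  have hnu : νhat₂ * ((1 - 1 / ℓ₂) * A ^ 2) ≤ νhat₂ * (‖u‖ ^ 2 + (ℓ₂ + 1) * E ^ 2) :=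
    mul_le_mul_of_nonneg_left hu2 hνhat₂
  -- error coefficient bound
  have hcoef : (ℓ₁ + νhat₂ * (ℓ₂ + 1)) * E ^ 2 ≤ (ℓ₁ + νhat₂ * (ℓ₂ + 1)) * ((m : ℝ) * μ ^ 2 / 4) := by
    apply mul_le_mul_of_nonneg_left hE2
    positivity
  -- min bounds
  set M := min (νhat₂ * (1 - 1 / ℓ₂) + ρbar₁) (νbar₁ + (ρhat₂ - 1 / (4 * ℓ₁))) with hM
  have hM1 : M * A ^ 2 ≤ (νhat₂ * (1 - 1 / ℓ₂) + ρbar₁) * A ^ 2 :=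
    mul_le_mul_of_nonneg_right (min_le_left _ _) (sq_nonneg A)
  have hM2 : M * B ^ 2 ≤ (νbar₁ + (ρhat₂ - 1 / (4 * ℓ₁))) * B ^ 2 :=
    mul_le_mul_of_nonneg_right (min_le_right _ _) (sq_nonneg B)
  -- rewrite the constant term
  have hconst : (αhat + τ * ((m : ℝ) * μ ^ 2 / 4) * (ℓ₁ + νhat₂ * (ℓ₂ + 1))) / τ
      = αhat / τ + (ℓ₁ + νhat₂ * (ℓ₂ + 1)) * ((m : ℝ) * μ ^ 2 / 4) := by
    field_simp
  have hsplit : (1 / τ) * ((V₁ (x₁ (k + 1)) + V₂ (xhat₂ (k + 1))) - (V₁ (x₁ k) + V₂ (xhat₂ k)))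
      = (1 / τ) * (V₁ (x₁ (k + 1)) - V₁ (x₁ k)) + (1 / τ) * (V₂ (xhat₂ (k + 1)) - V₂ (xhat₂ k)) := by
    ring
  rw [hsplit, hconst]
  have hfin : M * (A ^ 2 + B ^ 2) ≤ (νhat₂ * (1 - 1 / ℓ₂) + ρbar₁) * A ^ 2
      + (νbar₁ + (ρhat₂ - 1 / (4 * ℓ₁))) * B ^ 2 := by linarith
  have hstep : (1 / τ) * (V₁ (x₁ (k + 1)) - V₁ (x₁ k)) + (1 / τ) * (V₂ (xhat₂ (k + 1)) - V₂ (xhat₂ k))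
      ≤ -((νhat₂ * (1 - 1 / ℓ₂) + ρbar₁) * A ^ 2) - (νbar₁ + (ρhat₂ - 1 / (4 * ℓ₁))) * B ^ 2
        + (ℓ₁ + νhat₂ * (ℓ₂ + 1)) * E ^ 2 + αhat / τ := by
    have hIB : ⟪-b, a⟫ + ⟪u, b⟫ ≤ ℓ₁ * E ^ 2 + 1 / (4 * ℓ₁) * B ^ 2 := by
      rw [hinner]; linarith
    have hnu' : -(νhat₂ * ‖u‖ ^ 2) ≤ -(νhat₂ * (1 - 1 / ℓ₂) * A ^ 2) + νhat₂ * (ℓ₂ + 1) * E ^ 2 := by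
      nlinarith [hnu]
    linarith [h1, h2, hIB, hnu']
  linarith [hstep, hcoef, hfin]
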